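/- If f ∈ L¹(𝕋) and F = f∘θ_a^{-1} is Hölder continuous of order α > 0 (|F(x)-F(y)| ≤ M|x-y|^α), then S_n^a(f)(x) → f(x) for every x as n → ∞. -/

import Mathlib

open Real MeasureTheory Filter

/-- The Poisson kernel associated with `a = |a| e^{i t_a}`. -/
noncomputable def poisson (a : ℂ) (ta : ℝ) (t : ℝ) : ℝ :=
  (1 - ‖a‖ ^ 2) / (1 - 2 * ‖a‖ * Real.cos (t - ta) + ‖a‖ ^ 2)

/-- The `k`-th nonlinear Fourier coefficient of `f`. -/
noncomputable def coeff (θ p : ℝ → ℝ) (f : ℝ → ℂ) (k : ℤ) : ℂ :=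
  (1 / (2 * π)) * ∫ t in (-π)..π,
    f t * Complex.exp (-(Complex.I * (k : ℂ) * (θ t : ℂ))) * (p t : ℂ)

/-- The `n`-th partial sum of the nonlinear Fourier series of `f`. -/
noncomputable def partialSum (θ p : ℝ → ℝ) (f : ℝ → ℂ) (n : ℕ) (x : ℝ) : ℂ :=
  ∑ k ∈ Finset.Icc (-(n : ℤ)) (n : ℤ),
    coeff θ p f k * Complex.exp (Complex.I * (k : ℂ) * (θ x : ℂ))

/-- The Dirichlet kernel (symmetric exponential sum). -/
noncomputable def dk (n : ℕ) (t : ℝ) : ℂ :=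
  ∑ k ∈ Finset.Icc (-(n : ℤ)) (n : ℤ), Complex.exp (Complex.I * (k : ℂ) * (t : ℂ))

lemma icc_succ (n : ℕ) : Finset.Icc (-((n:ℤ)+1)) ((n:ℤ)+1) =
    insert (-((n:ℤ)+1)) (insert ((n:ℤ)+1) (Finset.Icc (-(n:ℤ)) (n:ℤ))) := by
  ext k; simp [Finset.mem_Icc]; omega

lemma dk_succ (n : ℕ) (t : ℝ) : dk (n+1) t = dk n t
    + Complex.exp (Complex.I * (((n:ℂ)+1)) * t) + Complex.exp (-(Complex.I * ((n:ℂ)+1) * t)) := by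
  unfold dk
  have h1 : ((n:ℤ)+1 : ℤ) ∉ Finset.Icc (-(n:ℤ)) (n:ℤ) := by simp
  have h2 : (-((n:ℤ)+1) : ℤ) ∉ insert ((n:ℤ)+1) (Finset.Icc (-(n:ℤ)) (n:ℤ)) := by
    simp; omega
  push_cast
  rw [icc_succ, Finset.sum_insert h2, Finset.sum_insert h1]
  push_cast
  ring_nf

lemma dk_mul (n : ℕ) (t : ℝ) :
    dk n t * (Complex.exp (Complex.I * ((t:ℂ)/2)) - Complex.exp (-(Complex.I * ((t:ℂ)/2)))) =
      Complex.exp (Complex.I * ((n:ℂ) + 1/2) * t) - Complex.exp (-(Complex.I * ((n:ℂ) + 1/2) * t)) := by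
  induction n with
  | zero =>
      simp only [dk, Nat.cast_zero, neg_zero, Finset.Icc_self, Finset.sum_singleton,
        Int.cast_zero, mul_zero, zero_mul, Complex.exp_zero, one_mul]
      congr 2 <;> ring
  | succ n ih =>
      rw [dk_succ, add_mul, add_mul, ih]
      rw [show ((↑(n+1):ℂ) + 1/2) = ((n:ℂ) + 1/2) + 1 by push_cast; ring]
      simp only [mul_sub, ← Complex.exp_add]
      ring_nf

lemma exp_int_cont (k : ℤ) : Continuous (fun t : ℝ => Complex.exp (Complex.I * (k : ℂ) * (t : ℂ))) :=
  Complex.continuous_exp.comp (by fun_prop)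

lemma dk_cont (n : ℕ) : Continuous (dk n) :=
  continuous_finset_sum _ fun k _ => exp_int_cont k

lemma exp_int_integral (k : ℤ) (hk : k ≠ 0) :
    (∫ t in (-π)..π, Complex.exp (Complex.I * (k : ℂ) * (t : ℂ))) = 0 := by
  have hc : (Complex.I * (k : ℂ)) ≠ 0 := by
    simp [Complex.I_ne_zero, hk]
  have := integral_exp_mul_complex (a := -π) (b := π) hc
  simp only [mul_assoc] at this ⊢
  rw [this]
  have : Complex.exp (Complex.I * ((k:ℂ) * (π:ℂ))) = Complex.exp (Complex.I * ((k:ℂ) * ((-π:ℝ):ℂ))) := by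
    rw [show Complex.exp (Complex.I * ((k:ℂ) * ((-π:ℝ):ℂ))) =
        Complex.exp (Complex.I * ((k:ℂ) * ((-π:ℝ):ℂ))) * 1 by ring,
      ← Complex.exp_int_mul_two_pi_mul_I k, ← Complex.exp_add]
    congr 1
    push_cast
    ring
  rw [this, sub_self, zero_div]

lemma dk_integral (n : ℕ) : (∫ t in (-π)..π, dk n t) = 2 * (π:ℂ) := by
  unfold dk
  rw [intervalIntegral.integral_finset_sum (fun k _ => (exp_int_cont k).intervalIntegrable _ _)]
  rw [Finset.sum_eq_single_of_mem 0 (by simp)]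
  · simp
    ring
  · intro k _ hk
    exact exp_int_integral k hk

lemma dk_periodic (n : ℕ) : Function.Periodic (dk n) (2 * π) := by
  intro t
  unfold dk
  refine Finset.sum_congr rfl fun k _ => ?_
  rw [show Complex.exp (Complex.I * (k:ℂ) * ((t:ℝ):ℂ)) =
      Complex.exp (Complex.I * (k:ℂ) * ((t:ℝ):ℂ)) * 1 by ring,
    ← Complex.exp_int_mul_two_pi_mul_I k, ← Complex.exp_add]
  congr 1
  push_cast
  ring

lemma exp_sub_exp (t : ℝ) : Complex.exp (Complex.I * ((t:ℂ)/2)) - Complex.exp (-(Complex.I * ((t:ℂ)/2)))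
    = 2 * Complex.I * ((Real.sin (t/2) : ℝ) : ℂ) := by
  rw [Complex.ofReal_sin, Complex.sin]
  push_cast
  rw [show -((t:ℂ)/2) * Complex.I = -(Complex.I * ((t:ℂ)/2)) by ring,
      show ((t:ℂ)/2) * Complex.I = Complex.I * ((t:ℂ)/2) by ring]
  linear_combination (Complex.exp (Complex.I*((t:ℂ)/2)) - Complex.exp (-(Complex.I*((t:ℂ)/2)))) * Complex.I_sq

lemma sin_half_ne (t : ℝ) (ht : t ∈ Set.Ioc (-π) π) (ht0 : t ≠ 0) : Real.sin (t/2) ≠ 0 := by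
  have hπ := Real.pi_pos
  intro h
  have h1 : -π < t/2 := by obtain ⟨h1, h2⟩ := ht; linarith
  have h2 : t/2 < π := by obtain ⟨ha, hb⟩ := ht; linarith
  have := (Real.sin_eq_zero_iff_of_lt_of_lt h1 h2).mp h
  exact ht0 (by linarith)

lemma abs_rpow_integrable (r : ℝ) (hr : -1 < r) :
    MeasureTheory.IntegrableOn (fun t : ℝ => |t| ^ r) (Set.Ioc (-π) π) MeasureTheory.volume := by
  have hπ := Real.pi_pos
  have h1 : IntervalIntegrable (fun t : ℝ => t ^ r) MeasureTheory.volume 0 π :=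
    intervalIntegral.intervalIntegrable_rpow' hr
  have h2 : MeasureTheory.IntegrableOn (fun t : ℝ => |t| ^ r) (Set.Ioc 0 π) MeasureTheory.volume := by
    refine MeasureTheory.IntegrableOn.congr_fun
      ((intervalIntegrable_iff_integrableOn_Ioc_of_le hπ.le).mp h1)
      (fun t ht => ?_) measurableSet_Ioc
    rw [abs_of_pos ht.1]
  have h3 : IntervalIntegrable (fun t : ℝ => |t| ^ r) MeasureTheory.volume 0 π :=
    (intervalIntegrable_iff_integrableOn_Ioc_of_le hπ.le).mpr h2
  have h4 : IntervalIntegrable (fun t : ℝ => |t| ^ r) MeasureTheory.volume (-π) 0 := by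
    have := (IntervalIntegrable.iff_comp_neg (f := fun t : ℝ => |t| ^ r) (a := 0) (b := π)).mp h3
    simp only [abs_neg, neg_zero] at this
    exact this.symm
  exact (intervalIntegrable_iff_integrableOn_Ioc_of_le (by linarith)).mp (h4.trans h3)


theorem holder_implies_pointwise_convergence
    (a : ℂ) (ha : ‖a‖ < 1) (ta : ℝ) (hA : a = (‖a‖ : ℂ) * Complex.exp (Complex.I * (ta : ℂ)))
    (θ : ℝ → ℝ) (hθc : Continuous θ) (hθm : StrictMono θ)
    (hper : ∀ t : ℝ, θ (t + 2 * π) = θ t + 2 * π)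
    (hderiv : ∀ t : ℝ, HasDerivAt θ (poisson a ta t) t)
    (θinv : ℝ → ℝ) (hinv₁ : ∀ t, θinv (θ t) = t) (hinv₂ : ∀ t, θ (θinv t) = t)
    (f : ℝ → ℂ) (hfm : Measurable f) (hfper : Function.Periodic f (2 * π))
    (hfi : IntervalIntegrable f MeasureTheory.volume (-π) π)
    (F : ℝ → ℂ) (hF : F = f ∘ θinv)
    (M α : ℝ) (hα : 0 < α)
    (hHolder : ∀ x y : ℝ, ‖F x - F y‖ ≤ M * |x - y| ^ α) :
    ∀ x : ℝ,
      Tendsto (fun n : ℕ => partialSum θ (poisson a ta) f n x) atTop (nhds (f x)) := by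
  intro x
  set y := θ x with hy
  -- continuity of F
  have hFcont : Continuous F := by
    rw [continuous_iff_continuousAt]
    intro x₀
    have hg : Tendsto (fun z : ℝ => M * |z - x₀| ^ α) (nhds x₀) (nhds 0) := by
      have h2 : ContinuousAt (fun z : ℝ => M * |z - x₀| ^ α) x₀ :=
        continuousAt_const.mul
          (((continuousAt_id.sub continuousAt_const).abs).rpow_const (Or.inr hα.le))
      have := h2.tendsto
      simpa [Real.zero_rpow hα.ne'] using this
    have h0 : Tendsto (fun z => F z - F x₀) (nhds x₀) (nhds 0) :=
      squeeze_zero_norm (fun z => hHolder z x₀) hg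
    have := h0.add (tendsto_const_nhds (x := F x₀))
    exact (by simpa using this : Tendsto F (nhds x₀) (nhds (F x₀)))
  have hfF : ∀ t, f t = F (θ t) := by
    intro t; rw [hF]; simp [hinv₁]
  have hfc : Continuous f := by
    have : f = F ∘ θ := funext fun t => hfF t
    rw [this]; exact hFcont.comp hθc
  have hFper : Function.Periodic F (2 * π) := by
    intro u
    have h1 : θinv (u + 2 * π) = θinv u + 2 * π := by
      have := hper (θinv u)
      have h2 : θ (θinv u + 2 * π) = u + 2 * π := by rw [this, hinv₂]
      have h3 := congrArg θinv h2
      rw [hinv₁] at h3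
      exact h3.symm
    rw [hF]; simp only [Function.comp_apply, h1]
    exact hfper (θinv u)
  have hden : ∀ t : ℝ, 0 < 1 - 2 * ‖a‖ * Real.cos (t - ta) + ‖a‖ ^ 2 := by
    intro t
    have h1 : Real.cos (t - ta) ≤ 1 := Real.cos_le_one _
    have h2 : 0 ≤ ‖a‖ := norm_nonneg a
    nlinarith
  have hpcont : Continuous (poisson a ta) := by
    unfold poisson
    exact continuous_const.div (by fun_prop) fun t => (hden t).ne'
  have hfx : f x = F y := hfF x
  -- Step 1: partial sum as one integral
  have step1 : ∀ n : ℕ, partialSum θ (poisson a ta) f n x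
      = (1 / (2 * (π:ℂ))) * ∫ t in (-π)..π, poisson a ta t • (F (θ t) * dk n (y - θ t)) := by
    intro n
    have hcont : ∀ k : ℤ, Continuous (fun t : ℝ =>
        f t * Complex.exp (-(Complex.I * (k:ℂ) * (θ t:ℂ))) * ((poisson a ta t : ℝ):ℂ)) := by
      intro k
      exact (hfc.mul (Complex.continuous_exp.comp (by fun_prop))).mul
        (Complex.continuous_ofReal.comp hpcont)
    unfold partialSum coeff
    calc ∑ k ∈ Finset.Icc (-(n:ℤ)) (n:ℤ), ((1 / (2 * (π:ℂ))) *
            ∫ t in (-π)..π, f t * Complex.exp (-(Complex.I * (k:ℂ) * (θ t:ℂ))) * ((poisson a ta t : ℝ):ℂ))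
            * Complex.exp (Complex.I * (k:ℂ) * (y:ℂ))
        = (1 / (2 * (π:ℂ))) * ∑ k ∈ Finset.Icc (-(n:ℤ)) (n:ℤ),
            ∫ t in (-π)..π, f t * Complex.exp (-(Complex.I * (k:ℂ) * (θ t:ℂ))) * ((poisson a ta t : ℝ):ℂ)
              * Complex.exp (Complex.I * (k:ℂ) * (y:ℂ)) := by
          rw [Finset.mul_sum]
          refine Finset.sum_congr rfl fun k _ => ?_
          rw [mul_assoc]
          congr 1
          exact (intervalIntegral.integral_mul_const _ _).symm
      _ = (1 / (2 * (π:ℂ))) * ∫ t in (-π)..π, ∑ k ∈ Finset.Icc (-(n:ℤ)) (n:ℤ),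
            f t * Complex.exp (-(Complex.I * (k:ℂ) * (θ t:ℂ))) * ((poisson a ta t : ℝ):ℂ)
              * Complex.exp (Complex.I * (k:ℂ) * (y:ℂ)) := by
          congr 1
          exact (intervalIntegral.integral_finset_sum
            (fun k _ => ((hcont k).mul continuous_const).intervalIntegrable _ _)).symm
      _ = (1 / (2 * (π:ℂ))) * ∫ t in (-π)..π, poisson a ta t • (F (θ t) * dk n (y - θ t)) := by
          congr 1
          refine intervalIntegral.integral_congr fun t _ => ?_
          rw [Complex.real_smul, dk, Finset.mul_sum, Finset.mul_sum]
          refine Finset.sum_congr rfl fun k _ => ?_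
          have he : Complex.exp (-(Complex.I * (k:ℂ) * (θ t:ℂ))) * Complex.exp (Complex.I * (k:ℂ) * (y:ℂ))
              = Complex.exp (Complex.I * (k:ℂ) * (((y - θ t):ℝ):ℂ)) := by
            rw [← Complex.exp_add]; congr 1; push_cast; ring
          calc f t * Complex.exp (-(Complex.I * (k:ℂ) * (θ t:ℂ))) * ((poisson a ta t : ℝ):ℂ)
              * Complex.exp (Complex.I * (k:ℂ) * (y:ℂ))
              = ((poisson a ta t : ℝ):ℂ) * (F (θ t) *
                (Complex.exp (-(Complex.I * (k:ℂ) * (θ t:ℂ))) * Complex.exp (Complex.I * (k:ℂ) * (y:ℂ)))) := by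
                rw [hfF t]; ring
            _ = ((poisson a ta t : ℝ):ℂ) * (F (θ t) * Complex.exp (Complex.I * (k:ℂ) * (((y - θ t):ℝ):ℂ))) := by
                rw [he]
  -- Step 2: change of variables
  have step2 : ∀ n : ℕ, (∫ t in (-π)..π, poisson a ta t • (F (θ t) * dk n (y - θ t)))
      = ∫ u in θ (-π)..θ π, F u * dk n (y - u) := by
    intro n
    have hg : Continuous (fun u => F u * dk n (y - u)) :=
      hFcont.mul ((dk_cont n).comp (by fun_prop))
    exact intervalIntegral.integral_comp_smul_deriv (fun t _ => hderiv t)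
      hpcont.continuousOn hg
  -- Step 3-4: periodic shift back to [-π, π]
  have step3 : θ π = θ (-π) + 2 * π := by
    have := hper (-π); rw [show -π + 2*π = π by ring] at this; exact this
  have step4 : ∀ n : ℕ, (∫ u in θ (-π)..θ π, F u * dk n (y - u))
      = ∫ u in (-π)..π, F u * dk n (y - u) := by
    intro n
    have hp : Function.Periodic (fun u => F u * dk n (y - u)) (2 * π) := by
      intro u
      simp only
      rw [hFper u, show y - (u + 2*π) = (y - u) - 2*π by ring]
      congr 1
      have := (dk_periodic n).sub_eq (y - u)
      simpa using this
    have := hp.intervalIntegral_add_eq (θ (-π)) (-π)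
    rw [← step3] at this
    rw [this, show -π + 2*π = π by ring]
  -- Step 5-6: reflect and shift
  have step56 : ∀ n : ℕ, (∫ u in (-π)..π, F u * dk n (y - u))
      = ∫ t in (-π)..π, F (y - t) * dk n t := by
    intro n
    have hΦper : Function.Periodic (fun t => F (y - t) * dk n t) (2 * π) := by
      intro t
      simp only
      rw [show y - (t + 2*π) = (y - t) - 2*π by ring]
      rw [hFper.sub_eq (y - t), dk_periodic n t]
    calc (∫ u in (-π)..π, F u * dk n (y - u))
        = ∫ u in (-π)..π, F (y - (y - u)) * dk n (y - u) := by
          congr 1; ext u; rw [sub_sub_cancel]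
      _ = ∫ t in y - π..y - -π, F (y - t) * dk n t :=
          intervalIntegral.integral_comp_sub_left (fun t => F (y - t) * dk n t) y
      _ = ∫ t in (-π)..(-π) + 2*π, F (y - t) * dk n t := by
          rw [show y - -π = (y - π) + 2*π by ring]
          exact hΦper.intervalIntegral_add_eq (y - π) (-π)
      _ = ∫ t in (-π)..π, F (y - t) * dk n t := by rw [show -π + 2*π = π by ring]

  -- representation of the partial sum
  have hπ := Real.pi_pos
  have repr : ∀ n : ℕ, partialSum θ (poisson a ta) f n x
      = (1 / (2 * (π:ℂ))) * ∫ t in (-π)..π, F (y - t) * dk n t := by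
    intro n
    rw [step1 n, step2 n, step4 n, step56 n]
  have h2π : (2 * (π:ℂ)) ≠ 0 :=
    mul_ne_zero two_ne_zero (Complex.ofReal_ne_zero.mpr Real.pi_ne_zero)
  have hKint : ∀ n : ℕ, IntervalIntegrable (fun t => F (y - t) * dk n t)
      MeasureTheory.volume (-π) π := fun n =>
    ((hFcont.comp (by fun_prop)).mul (dk_cont n)).intervalIntegrable _ _
  have key : ∀ n : ℕ, partialSum θ (poisson a ta) f n x - f x
      = (1 / (2 * (π:ℂ))) * ∫ t in (-π)..π, (F (y - t) - F y) * dk n t := by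
    intro n
    rw [repr n, hfx]
    have hsub : (∫ t in (-π)..π, (F (y - t) - F y) * dk n t)
        = (∫ t in (-π)..π, F (y - t) * dk n t) - ∫ t in (-π)..π, F y * dk n t := by
      rw [← intervalIntegral.integral_sub (g := fun t => F y * dk n t) (hKint n)
        ((continuous_const.mul (dk_cont n)).intervalIntegrable _ _)]
      congr 1
      ext t
      ring
    rw [hsub, mul_sub]
    congr 1
    rw [intervalIntegral.integral_const_mul, dk_integral n]
    field_simp
  -- the auxiliary functions
  set d : ℝ → ℂ := fun t =>
    Complex.exp (Complex.I * ((t:ℂ)/2)) - Complex.exp (-(Complex.I * ((t:ℂ)/2))) with hd_def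
  set g₀ : ℝ → ℂ := fun t => (F (y - t) - F y) / d t with hg₀_def
  set G : ℝ → ℂ := (Set.Ioc (-π) π).indicator g₀ with hG_def
  have hdne : ∀ t ∈ Set.Ioc (-π) π, t ≠ 0 → d t ≠ 0 := by
    intro t ht ht0
    rw [hd_def]
    simp only
    rw [exp_sub_exp]
    exact mul_ne_zero (mul_ne_zero two_ne_zero Complex.I_ne_zero)
      (Complex.ofReal_ne_zero.mpr (sin_half_ne t ht ht0))
  have h0ae : ∀ᵐ t : ℝ, t ≠ (0:ℝ) := by
    have h := MeasureTheory.compl_mem_ae_iff.mpr (measure_singleton (0:ℝ) (μ := MeasureTheory.volume))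
    exact Filter.eventually_of_mem h fun t ht => ht
  have haeq : ∀ n : ℕ, (∫ t in (-π)..π, (F (y - t) - F y) * dk n t)
      = ∫ t in (-π)..π, g₀ t * (Complex.exp (Complex.I * ((n:ℂ) + 1/2) * t)
          - Complex.exp (-(Complex.I * ((n:ℂ) + 1/2) * t))) := by
    intro n
    refine intervalIntegral.integral_congr_ae ?_
    filter_upwards [h0ae] with t ht0 htmem
    have htIoc : t ∈ Set.Ioc (-π) π := by
      rwa [Set.uIoc_of_le (by linarith : -π ≤ π)] at htmem
    have hd := hdne t htIoc ht0
    rw [← dk_mul n t, hg₀_def]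
    simp only
    field_simp
    simp only [hd_def]
    ring_nf
  have hIoc_eq : ∀ n : ℕ, (∫ t in (-π)..π, g₀ t * (Complex.exp (Complex.I * ((n:ℂ) + 1/2) * t)
          - Complex.exp (-(Complex.I * ((n:ℂ) + 1/2) * t))))
      = ∫ t : ℝ, G t * (Complex.exp (Complex.I * ((n:ℂ) + 1/2) * t)
          - Complex.exp (-(Complex.I * ((n:ℂ) + 1/2) * t))) := by
    intro n
    rw [intervalIntegral.integral_of_le (by linarith : -π ≤ π),
      ← MeasureTheory.integral_indicator measurableSet_Ioc]
    congr 1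
    ext t
    by_cases h : t ∈ Set.Ioc (-π) π
    · rw [Set.indicator_of_mem h, hG_def, Set.indicator_of_mem h]
    · rw [Set.indicator_of_notMem h, hG_def, Set.indicator_of_notMem h, zero_mul]
  -- integrability of G
  have hnumc : Continuous fun t : ℝ => F (y - t) - F y :=
    (hFcont.comp (by fun_prop)).sub continuous_const
  have hdc : Continuous d := by
    rw [hd_def]
    exact (Complex.continuous_exp.comp (by fun_prop)).sub
      (Complex.continuous_exp.comp (by fun_prop))
  have hg₀m : MeasureTheory.AEStronglyMeasurable g₀ MeasureTheory.volume := by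
    rw [hg₀_def]
    exact (hnumc.measurable.div hdc.measurable).aestronglyMeasurable
  have hM : 0 ≤ M := by
    have h := hHolder 0 1
    rw [show |(0:ℝ) - 1| = 1 by norm_num, Real.one_rpow, mul_one] at h
    exact (norm_nonneg _).trans h
  have bound : ∀ t ∈ Set.Ioc (-π) π, ‖g₀ t‖ ≤ (M * π / 2) * |t| ^ (α - 1) := by
    intro t ht
    by_cases ht0 : t = 0
    · subst ht0
      rw [hg₀_def]
      simp only [sub_zero, sub_self, zero_div, norm_zero]
      exact mul_nonneg (div_nonneg (mul_nonneg hM hπ.le) (by norm_num))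
        (Real.rpow_nonneg (abs_nonneg _) _)
    · have habs : |t| ≤ π := abs_le.mpr ⟨ht.1.le, ht.2⟩
      have hsin : |t| / π ≤ |Real.sin (t/2)| := by
        have h1 : |t/2| ≤ π / 2 := by rw [abs_div]; rw [abs_of_pos (by norm_num : (0:ℝ) < 2)]; linarith [abs_nonneg t]
        have := Real.mul_abs_le_abs_sin h1
        rw [abs_div, abs_of_pos (by norm_num : (0:ℝ) < 2)] at this
        calc |t| / π = 2 / π * (|t| / 2) := by field_simp
          _ ≤ |Real.sin (t/2)| := this
      have hdnorm : ‖d t‖ = 2 * |Real.sin (t/2)| := by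
        rw [hd_def]
        simp only
        rw [exp_sub_exp]
        rw [norm_mul, norm_mul, Complex.norm_I, mul_one, Complex.norm_real, Real.norm_eq_abs]
        norm_num
      have hnum_le : ‖F (y - t) - F y‖ ≤ M * |t| ^ α := by
        have := hHolder (y - t) y
        rwa [show y - t - y = -t by ring, abs_neg] at this
      have hpos : 0 < 2 * (|t| / π) := by
        have : 0 < |t| := abs_pos.mpr ht0
        positivity
      have hden_le : 2 * (|t| / π) ≤ ‖d t‖ := by
        rw [hdnorm]
        nlinarith [hsin]
      have h1 : ‖g₀ t‖ ≤ (M * |t| ^ α) / (2 * (|t| / π)) := by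
        rw [hg₀_def]
        simp only
        rw [norm_div]
        exact div_le_div₀ (mul_nonneg hM (Real.rpow_nonneg (abs_nonneg _) _)) hnum_le hpos hden_le
      refine h1.trans (le_of_eq ?_)
      rw [Real.rpow_sub (abs_pos.mpr ht0), Real.rpow_one]
      field_simp
  have hbint : MeasureTheory.Integrable
      ((Set.Ioc (-π) π).indicator fun t => (M * π / 2) * |t| ^ (α - 1))
      MeasureTheory.volume :=
    (MeasureTheory.integrable_indicator_iff measurableSet_Ioc).mpr
      ((abs_rpow_integrable (α - 1) (by linarith)).const_mul _)
  have hGint : MeasureTheory.Integrable G MeasureTheory.volume := by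
    refine MeasureTheory.Integrable.mono hbint (hg₀m.indicator measurableSet_Ioc)
      (Filter.Eventually.of_forall fun t => ?_)
    by_cases h : t ∈ Set.Ioc (-π) π
    · rw [hG_def, Set.indicator_of_mem h, Set.indicator_of_mem h]
      exact (bound t h).trans (le_abs_self _)
    · rw [hG_def, Set.indicator_of_notMem h, Set.indicator_of_notMem h]
      simp
  have hGexp1 : ∀ n : ℕ, MeasureTheory.Integrable
      (fun t : ℝ => Complex.exp (Complex.I * ((n:ℂ) + 1/2) * (t:ℂ)) * G t) MeasureTheory.volume := by
    intro n
    refine hGint.bdd_mul (c := 1) (Complex.continuous_exp.comp (by fun_prop)).aestronglyMeasurable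
      (Filter.Eventually.of_forall fun t => ?_)
    rw [Complex.norm_exp]
    simp [Complex.mul_re]
  have hGexp2 : ∀ n : ℕ, MeasureTheory.Integrable
      (fun t : ℝ => Complex.exp (-(Complex.I * ((n:ℂ) + 1/2) * (t:ℂ))) * G t)
      MeasureTheory.volume := by
    intro n
    refine hGint.bdd_mul (c := 1) (Complex.continuous_exp.comp (by fun_prop)).aestronglyMeasurable
      (Filter.Eventually.of_forall fun t => ?_)
    rw [Complex.norm_exp]
    simp [Complex.mul_re]
  have hsplit : ∀ n : ℕ, (∫ t : ℝ, G t * (Complex.exp (Complex.I * ((n:ℂ) + 1/2) * t)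
          - Complex.exp (-(Complex.I * ((n:ℂ) + 1/2) * t))))
      = (∫ t : ℝ, Complex.exp (Complex.I * ((n:ℂ) + 1/2) * t) * G t)
        - ∫ t : ℝ, Complex.exp (-(Complex.I * ((n:ℂ) + 1/2) * t)) * G t := by
    intro n
    rw [← MeasureTheory.integral_sub (hGexp1 n) (hGexp2 n)]
    congr 1
    ext t
    ring
  -- Riemann-Lebesgue
  have hπC : ((π:ℝ):ℂ) ≠ 0 := Complex.ofReal_ne_zero.mpr Real.pi_ne_zero
  have hbase : Tendsto (fun n : ℕ => (n:ℝ) + 1/2) atTop atTop :=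
    tendsto_atTop_add_const_right atTop (1/2) tendsto_natCast_atTop_atTop
  have hwpos : Tendsto (fun n : ℕ => ((n:ℝ) + 1/2) / (2*π)) atTop atTop :=
    hbase.atTop_div_const (by positivity)
  have hw1 : Tendsto (fun n : ℕ => -(((n:ℝ) + 1/2) / (2*π))) atTop (cocompact ℝ) := by
    rw [cocompact_eq_atBot_atTop]
    exact (tendsto_neg_atTop_atBot.comp hwpos).mono_right le_sup_left
  have hw2 : Tendsto (fun n : ℕ => ((n:ℝ) + 1/2) / (2*π)) atTop (cocompact ℝ) := by
    rw [cocompact_eq_atBot_atTop]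
    exact hwpos.mono_right le_sup_right
  have hRL := Real.tendsto_integral_exp_smul_cocompact G
  have hA : Tendsto (fun n : ℕ => ∫ t : ℝ, Complex.exp (Complex.I * ((n:ℂ) + 1/2) * t) * G t)
      atTop (nhds 0) := by
    have h := hRL.comp hw1
    refine h.congr fun n => ?_
    simp only [Function.comp_apply]
    refine MeasureTheory.integral_congr_ae (Filter.Eventually.of_forall fun v => ?_)
    simp only [Circle.smul_def, Real.fourierChar_apply]
    congr 2
    rw [show 2 * π * -(v * -(((n:ℝ) + 1/2) / (2*π))) = v * ((n:ℝ) + 1/2) by field_simp]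
    push_cast
    ring
  have hB : Tendsto (fun n : ℕ => ∫ t : ℝ, Complex.exp (-(Complex.I * ((n:ℂ) + 1/2) * t)) * G t)
      atTop (nhds 0) := by
    have h := hRL.comp hw2
    refine h.congr fun n => ?_
    simp only [Function.comp_apply]
    refine MeasureTheory.integral_congr_ae (Filter.Eventually.of_forall fun v => ?_)
    simp only [Circle.smul_def, Real.fourierChar_apply]
    congr 2
    rw [show 2 * π * -(v * (((n:ℝ) + 1/2) / (2*π))) = -(v * ((n:ℝ) + 1/2)) by field_simp]
    push_cast
    ring
  have hzero : Tendsto (fun n : ℕ => partialSum θ (poisson a ta) f n x - f x) atTop (nhds 0) := by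
    have h := (hA.sub hB).const_mul (1 / (2 * (π:ℂ)))
    rw [sub_zero, mul_zero] at h
    refine Tendsto.congr (fun n => ?_) h
    rw [key n, haeq n, hIoc_eq n, hsplit n]
  have hfinal := hzero.add_const (f x)
  rw [zero_add] at hfinal
  refine hfinal.congr fun n => ?_
  ring
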